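/- Let a, b ∈ ℝ^{n+1} be such that the segment L_s(a,b) = {(1-λ)a + λb : λ ∈ [0,1]} does not contain 0 and a, b are not collinear. Then the radial projection ψ(p) = p/‖p‖ maps L_s(a,b) bijectively onto the minimizing geodesic G(ψ(a), ψ(b)) on S^n; in particular {p/‖p‖ : p ∈ L_s(a,b)} = G(ψ(a), ψ(b)). -/

import Mathlib

open scoped RealInnerProductSpace Classical

/-- Radial projection onto the unit sphere: `ψ(p) = p / ‖p‖`. -/
noncomputable def radialProj {n : ℕ} (p : EuclideanSpace ℝ (Fin (n + 1))) :
    EuclideanSpace ℝ (Fin (n + 1)) :=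
  ‖p‖⁻¹ • p

/-- The (unique, minimizing) geodesic on `Sⁿ` connecting `u` and `v` (for `u ≠ -v`),
`{(sin((1-λ)θ) u + sin(λθ) v)/sin θ : λ ∈ [0,1]}` with `θ = arccos(uᵀv)`;
for `u = v` it is the singleton `{u}`. -/
noncomputable def sphGeodesic {n : ℕ} (u v : EuclideanSpace ℝ (Fin (n + 1))) :
    Set (EuclideanSpace ℝ (Fin (n + 1))) :=
  if u = v then {u}
  else
    {x | ∃ l ∈ Set.Icc (0 : ℝ) 1,
      x = (Real.sin ((1 - l) * Real.arccos ⟪u, v⟫) / Real.sin (Real.arccos ⟪u, v⟫)) • u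
        + (Real.sin (l * Real.arccos ⟪u, v⟫) / Real.sin (Real.arccos ⟪u, v⟫)) • v}

lemma normCombo {E : Type*} [NormedAddCommGroup E] [InnerProductSpace ℝ E]
    (u v : E) (hu : ‖u‖ = 1) (hv : ‖v‖ = 1) (α β : ℝ) :
    ‖α • u + β • v‖ ^ 2 = α ^ 2 + β ^ 2 + 2 * α * β * ⟪u, v⟫ := by
  rw [norm_add_sq_real, norm_smul, norm_smul, real_inner_smul_left, real_inner_smul_right,
    hu, hv, Real.norm_eq_abs, Real.norm_eq_abs]
  rw [mul_one, mul_one, sq_abs, sq_abs]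
  ring

lemma param_vals (c : ℝ) (hc1 : -1 < c) (hc2 : c < 1) (t : ℝ) (ht0 : 0 ≤ t) (ht1 : t ≤ 1) :
    0 ≤ Real.sin ((1 - t) * Real.arccos c) / Real.sin (Real.arccos c) ∧
    0 ≤ Real.sin (t * Real.arccos c) / Real.sin (Real.arccos c) ∧
    (Real.sin ((1 - t) * Real.arccos c) / Real.sin (Real.arccos c)) ^ 2
      + (Real.sin (t * Real.arccos c) / Real.sin (Real.arccos c)) ^ 2
      + 2 * (Real.sin ((1 - t) * Real.arccos c) / Real.sin (Real.arccos c))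
          * (Real.sin (t * Real.arccos c) / Real.sin (Real.arccos c)) * c = 1 := by
  set θ := Real.arccos c with hθ
  have hθ0 : 0 < θ := Real.arccos_pos.2 hc2
  have hθπ : θ < Real.pi :=
    lt_of_le_of_ne (Real.arccos_le_pi c) fun h => by
      have := Real.arccos_eq_pi.1 h; linarith
  have hS : 0 < Real.sin θ := Real.sin_pos_of_pos_of_lt_pi hθ0 hθπ
  have hcθ : Real.cos θ = c := Real.cos_arccos hc1.le hc2.le
  have h1 : 0 ≤ Real.sin ((1 - t) * θ) := by
    apply Real.sin_nonneg_of_nonneg_of_le_pi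
    · exact mul_nonneg (by linarith) hθ0.le
    · nlinarith
  have h2 : 0 ≤ Real.sin (t * θ) := by
    apply Real.sin_nonneg_of_nonneg_of_le_pi
    · positivity
    · nlinarith
  refine ⟨div_nonneg h1 hS.le, div_nonneg h2 hS.le, ?_⟩
  have hsub : Real.sin ((1 - t) * θ)
      = Real.sin θ * Real.cos (t * θ) - Real.cos θ * Real.sin (t * θ) := by
    have : (1 - t) * θ = θ - t * θ := by ring
    rw [this, Real.sin_sub]
  have hp1 : Real.sin (t * θ) ^ 2 + Real.cos (t * θ) ^ 2 = 1 := Real.sin_sq_add_cos_sq _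
  have hp2 : Real.sin θ ^ 2 + Real.cos θ ^ 2 = 1 := Real.sin_sq_add_cos_sq _
  have hp2' : Real.sin θ ^ 2 + c ^ 2 = 1 := by rw [hcθ] at hp2; exact hp2
  rw [hsub, hcθ]
  field_simp
  linear_combination Real.sin θ ^ 2 * hp1 - Real.sin (t * θ) ^ 2 * hp2'

lemma param_exists (c : ℝ) (hc1 : -1 < c) (hc2 : c < 1) (α β : ℝ)
    (hα : 0 ≤ α) (hβ : 0 ≤ β) (h1 : α ^ 2 + β ^ 2 + 2 * α * β * c = 1) :
    ∃ t ∈ Set.Icc (0:ℝ) 1,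
      α = Real.sin ((1 - t) * Real.arccos c) / Real.sin (Real.arccos c) ∧
      β = Real.sin (t * Real.arccos c) / Real.sin (Real.arccos c) := by
  set θ := Real.arccos c with hθdef
  have hθ0 : 0 < θ := Real.arccos_pos.2 hc2
  have hθπ : θ < Real.pi :=
    lt_of_le_of_ne (Real.arccos_le_pi c) fun h => by
      have := Real.arccos_eq_pi.1 h; linarith
  have hS : 0 < Real.sin θ := Real.sin_pos_of_pos_of_lt_pi hθ0 hθπ
  have hcθ : Real.cos θ = c := Real.cos_arccos hc1.le hc2.le
  have hSθ : Real.sin θ = Real.sqrt (1 - c ^ 2) := Real.sin_arccos c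
  have hkey : (α + β * c) ^ 2 + β ^ 2 * (1 - c ^ 2) = 1 := by ring_nf; nlinarith [h1]
  have h1c : (0:ℝ) ≤ 1 - c ^ 2 := by nlinarith
  have hsq : (α + β * c) ^ 2 ≤ 1 := by nlinarith [mul_nonneg (sq_nonneg β) h1c]
  have habs := abs_le.1 ((sq_le_one_iff_abs_le_one _).1 hsq)
  have hb1 : -1 ≤ α + β * c := habs.1
  have hb2 : α + β * c ≤ 1 := habs.2
  set φ := Real.arccos (α + β * c) with hφdef
  have hφ0 : 0 ≤ φ := Real.arccos_nonneg _
  have hφπ : φ ≤ Real.pi := Real.arccos_le_pi _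
  have hcφ : Real.cos φ = α + β * c := Real.cos_arccos hb1 hb2
  have hsφ : Real.sin φ = β * Real.sin θ := by
    rw [hφdef, Real.sin_arccos, hSθ]
    have : 1 - (α + β * c) ^ 2 = β ^ 2 * (1 - c ^ 2) := by linarith [hkey]
    rw [this, Real.sqrt_mul (sq_nonneg β), Real.sqrt_sq hβ]
  have hφθ : φ ≤ θ := by
    by_contra h
    push_neg at h
    have h3 : 0 < Real.sin (φ - θ) :=
      Real.sin_pos_of_pos_of_lt_pi (by linarith) (by linarith)
    rw [Real.sin_sub, hsφ, hcφ, hcθ] at h3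
    nlinarith
  refine ⟨φ / θ, ⟨div_nonneg hφ0 hθ0.le, (div_le_one hθ0).2 hφθ⟩, ?_, ?_⟩
  · have : (1 - φ / θ) * θ = θ - φ := by field_simp
    rw [this, Real.sin_sub, hsφ, hcφ, hcθ]
    field_simp
    ring
  · have : φ / θ * θ = φ := by field_simp
    rw [this, hsφ]
    field_simp

/-- If the segment `L_s(a,b)` does not contain `0` and `a, b` are not collinear,
then the radial projection `ψ(p) = p/‖p‖` maps `L_s(a,b)` bijectively onto the
minimizing geodesic `G(ψ(a), ψ(b))`; in particular
`{p/‖p‖ : p ∈ L_s(a,b)} = G(ψ(a), ψ(b))`. -/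
theorem radial_projection_of_segment_is_geodesic (n : ℕ)
    (a b : EuclideanSpace ℝ (Fin (n + 1)))
    (h0 : (0 : EuclideanSpace ℝ (Fin (n + 1))) ∉ segment ℝ a b)
    (hcol : ∀ q : ℝ, a ≠ q • b) :
    Set.InjOn radialProj (segment ℝ a b) ∧
    radialProj '' segment ℝ a b = sphGeodesic (radialProj a) (radialProj b) := by
  have ha0 : a ≠ 0 := fun h => h0 (h ▸ left_mem_segment ℝ a b)
  have hb0 : b ≠ 0 := fun h => h0 (h ▸ right_mem_segment ℝ a b)
  have hna : (0:ℝ) < ‖a‖ := norm_pos_iff.2 ha0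
  have hnb : (0:ℝ) < ‖b‖ := norm_pos_iff.2 hb0
  have hli : ∀ s r : ℝ, s • a + r • b = 0 → s = 0 ∧ r = 0 := by
    intro s r h
    by_cases hs : s = 0
    · subst hs
      rw [zero_smul, zero_add, smul_eq_zero] at h
      exact ⟨rfl, h.resolve_right hb0⟩
    · exfalso
      apply hcol (s⁻¹ * (-r))
      have h2 : s • a = (-r) • b := by
        rw [neg_smul]; linear_combination (norm := module) h
      calc a = s⁻¹ • (s • a) := by rw [smul_smul, inv_mul_cancel₀ hs, one_smul]
        _ = (s⁻¹ * (-r)) • b := by rw [h2, smul_smul]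
  set u : EuclideanSpace ℝ (Fin (n+1)) := radialProj a with hu_def
  set v : EuclideanSpace ℝ (Fin (n+1)) := radialProj b with hv_def
  have hua : u = ‖a‖⁻¹ • a := rfl
  have hvb : v = ‖b‖⁻¹ • b := rfl
  have hu1 : ‖u‖ = 1 := norm_smul_inv_norm ha0
  have hv1 : ‖v‖ = 1 := norm_smul_inv_norm hb0
  have hau : a = ‖a‖ • u := by
    rw [hua, smul_smul, mul_inv_cancel₀ hna.ne', one_smul]
  have huv : u ≠ v := by
    intro h
    apply hcol (‖a‖ * ‖b‖⁻¹)
    calc a = ‖a‖ • u := hau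
      _ = (‖a‖ * ‖b‖⁻¹) • b := by rw [h, hvb, smul_smul]
  have hunv : u ≠ -v := by
    intro h
    apply hcol (‖a‖ * (-‖b‖⁻¹))
    calc a = ‖a‖ • u := hau
      _ = (‖a‖ * (-‖b‖⁻¹)) • b := by
            rw [h, hvb, ← neg_smul, smul_smul, mul_neg]
  have hc2 : ⟪u, v⟫ < 1 := (inner_lt_one_iff_real_of_norm_eq_one hu1 hv1).2 huv
  have hc1 : -1 < ⟪u, v⟫ := by
    have h := (inner_lt_one_iff_real_of_norm_eq_one hu1 (by rw [norm_neg]; exact hv1)).2 hunv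
    rw [inner_neg_right] at h
    linarith
  constructor
  · -- injectivity
    rintro p hp q hq hpq
    have hp0 : p ≠ 0 := fun h => h0 (h ▸ hp)
    have hq0 : q ≠ 0 := fun h => h0 (h ▸ hq)
    have hnp : (0:ℝ) < ‖p‖ := norm_pos_iff.2 hp0
    have hnq : (0:ℝ) < ‖q‖ := norm_pos_iff.2 hq0
    have hpq' : p = (‖p‖ * ‖q‖⁻¹) • q := by
      have h2 : ‖p‖ • (‖p‖⁻¹ • p) = ‖p‖ • (‖q‖⁻¹ • q) := by
        rw [show (‖p‖⁻¹ • p : EuclideanSpace ℝ (Fin (n+1))) = radialProj p from rfl,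
          show (‖q‖⁻¹ • q : EuclideanSpace ℝ (Fin (n+1))) = radialProj q from rfl, hpq]
      rwa [smul_smul, smul_smul, mul_inv_cancel₀ hnp.ne', one_smul] at h2
    obtain ⟨sp, rp, hsp, hrp, hsum1, hpe⟩ := hp
    obtain ⟨sq, rq, hsq, hrq, hsum2, hqe⟩ := hq
    have heq : (sp - (‖p‖ * ‖q‖⁻¹) * sq) • a + (rp - (‖p‖ * ‖q‖⁻¹) * rq) • b = 0 := by
      have h3 : sp • a + rp • b = (‖p‖ * ‖q‖⁻¹) • (sq • a + rq • b) := by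
        rw [hpe, hqe, ← hpq']
      rw [smul_add, smul_smul, smul_smul] at h3
      linear_combination (norm := module) h3
    obtain ⟨e1, e2⟩ := hli _ _ heq
    have hk1 : ‖p‖ * ‖q‖⁻¹ = 1 := by
      linear_combination hsum1 - (‖p‖ * ‖q‖⁻¹) * hsum2 - e1 - e2
    rw [hk1, one_mul] at e1 e2
    have hsp' : sp = sq := by linarith
    have hrp' : rp = rq := by linarith
    rw [← hpe, ← hqe, hsp', hrp']
  · -- image
    rw [sphGeodesic, if_neg huv]
    ext x
    constructor
    · rintro ⟨p, hp, rfl⟩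
      have hp0 : p ≠ 0 := fun h => h0 (h ▸ hp)
      have hnp : (0:ℝ) < ‖p‖ := norm_pos_iff.2 hp0
      obtain ⟨s, r, hs, hr, hsum, hpe⟩ := hp
      obtain ⟨α, hα_def⟩ : ∃ x : ℝ, x = s * ‖a‖ * ‖p‖⁻¹ := ⟨_, rfl⟩
      obtain ⟨β, hβ_def⟩ : ∃ x : ℝ, x = r * ‖b‖ * ‖p‖⁻¹ := ⟨_, rfl⟩
      have hα : 0 ≤ α := by rw [hα_def]; positivity
      have hβ : 0 ≤ β := by rw [hβ_def]; positivity
      have hx : radialProj p = α • u + β • v := by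
        have e1 : α • u = (‖p‖⁻¹ * s) • a := by
          rw [hua, smul_smul]
          congr 1
          rw [hα_def]
          field_simp
        have e2 : β • v = (‖p‖⁻¹ * r) • b := by
          rw [hvb, smul_smul]
          congr 1
          rw [hβ_def]
          field_simp
        rw [e1, e2, radialProj, ← hpe, smul_add, smul_smul, smul_smul]
      have hn1 : ‖α • u + β • v‖ = 1 := by
        rw [← hx, radialProj]; exact norm_smul_inv_norm hp0
      have h1 : α ^ 2 + β ^ 2 + 2 * α * β * ⟪u, v⟫ = 1 := by
        have h4 := normCombo u v hu1 hv1 α β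
        rw [hn1, one_pow] at h4
        linarith
      obtain ⟨t, ht, he1, he2⟩ := param_exists ⟪u, v⟫ hc1 hc2 α β hα hβ h1
      exact ⟨t, ht, by rw [hx, he1, he2]⟩
    · rintro ⟨t, ⟨ht0, ht1⟩, rfl⟩
      obtain ⟨hA, hB, h1⟩ := param_vals ⟪u, v⟫ hc1 hc2 t ht0 ht1
      obtain ⟨A, hA_def⟩ : ∃ x : ℝ,
          x = Real.sin ((1 - t) * Real.arccos ⟪u, v⟫) / Real.sin (Real.arccos ⟪u, v⟫) :=
        ⟨_, rfl⟩
      obtain ⟨B, hB_def⟩ : ∃ x : ℝ,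
          x = Real.sin (t * Real.arccos ⟪u, v⟫) / Real.sin (Real.arccos ⟪u, v⟫) :=
        ⟨_, rfl⟩
      rw [← hA_def] at hA
      rw [← hB_def] at hB
      rw [← hA_def, ← hB_def] at h1
      have hAB : ¬ (A = 0 ∧ B = 0) := by
        rintro ⟨rfl, rfl⟩; norm_num at h1
      have hxn : ‖A • u + B • v‖ = 1 := by
        have h4 := normCombo u v hu1 hv1 A B
        rw [h1] at h4
        rw [← Real.sqrt_sq (norm_nonneg (A • u + B • v)), h4, Real.sqrt_one]
      obtain ⟨s, hs_def⟩ : ∃ x : ℝ, x = A / ‖a‖ := ⟨_, rfl⟩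
      obtain ⟨r, hr_def⟩ : ∃ x : ℝ, x = B / ‖b‖ := ⟨_, rfl⟩
      have hs : 0 ≤ s := by rw [hs_def]; positivity
      have hr : 0 ≤ r := by rw [hr_def]; positivity
      have hσ : 0 < s + r := by
        rcases lt_or_eq_of_le hA with h | h
        · have : 0 < s := by rw [hs_def]; positivity
          linarith
        · rcases lt_or_eq_of_le hB with h' | h'
          · have : 0 < r := by rw [hr_def]; positivity
            linarith
          · exact absurd ⟨h.symm, h'.symm⟩ hAB
      have hsx : s • a + r • b = A • u + B • v := by
        rw [hua, hvb, smul_smul, smul_smul, hs_def, hr_def,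
          div_eq_mul_inv, div_eq_mul_inv]
      have hpx : (s/(s+r)) • a + (r/(s+r)) • b = (s+r)⁻¹ • (A • u + B • v) := by
        rw [← hsx, smul_add, smul_smul, smul_smul, div_eq_inv_mul, div_eq_inv_mul]
      have hfin : radialProj ((s/(s+r)) • a + (r/(s+r)) • b) = A • u + B • v := by
        rw [radialProj, hpx, norm_smul, hxn, mul_one, norm_inv, Real.norm_eq_abs,
          abs_of_pos hσ, inv_inv, smul_smul, mul_inv_cancel₀ hσ.ne', one_smul]
      rw [hA_def, hB_def] at hfin
      exact ⟨(s/(s+r)) • a + (r/(s+r)) • b,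
        ⟨s/(s+r), r/(s+r), by positivity, by positivity, by field_simp, rfl⟩, hfin⟩
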